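/- (Gradient position observer, Proposition 2, transient-free form.) Let α > 0, γ > 0, let Ω, v : ℝ → EuclideanSpace ℝ (Fin 3) be continuous, and let z : ℝ → EuclideanSpace ℝ (Fin 3) be differentiable with z(t) ≠ 0 and z'(t) = −Ω(t) ×₃ z(t) − v(t) for all t ≥ 0. Set y(t) := ‖z(t)‖⁻¹ • z(t). Suppose x̄, p₂, q : ℝ → EuclideanSpace ℝ (Fin 3) are differentiable and satisfy for all t ≥ 0: x̄'(t) = −α x̄(t) + α² • y(t) with x̄(0) = α • y(0); p₂'(t) = −α p₂(t) + α • (Ω(t) ×₃ y(t)) with p₂(0) = 0; and, with φ(t) := α • y(t) − x̄(t) + p₂(t), q'(t) = −α q(t) + ⟪y(t), v(t)⟫ • φ(t) + α • (v(t) − ⟪y(t), v(t)⟫ • y(t)) with q(0) = 0. Assume there exist T > 0 and δ > 0 such that ∫_t^{t+T} ‖φ(s)‖² ds ≥ δ for all t ≥ 0. If r̂ : ℝ → ℝ is differentiable with r̂'(t) = −⟪y(t), v(t)⟫ − γ ⟪φ(t), r̂(t) • φ(t) + q(t)⟫ for all t ≥ 0, then ‖r̂(t) • y(t) − z(t)‖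 ≤ |r̂(0) − ‖z(0)‖| · exp(γδ) · exp(−(γδ/T) t) for all t ≥ 0. -/

import Mathlib

open scoped RealInnerProductSpace

/-- Cross product on `EuclideanSpace ℝ (Fin 3)`, transported from Mathlib's
`crossProduct` on `Fin 3 → ℝ`. -/
noncomputable def cross3 (a b : EuclideanSpace ℝ (Fin 3)) : EuclideanSpace ℝ (Fin 3) :=
  (WithLp.equiv 2 (Fin 3 → ℝ)).symm
    (crossProduct ((WithLp.equiv 2 (Fin 3 → ℝ)) a) ((WithLp.equiv 2 (Fin 3 → ℝ)) b))

lemma inner_cross3_self (a b : EuclideanSpace ℝ (Fin 3)) : ⟪a, cross3 b a⟫ = 0 := by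
  have h := dot_cross_self ((WithLp.equiv 2 (Fin 3 → ℝ)) b) ((WithLp.equiv 2 (Fin 3 → ℝ)) a)
  simpa [cross3, PiLp.inner_apply, RCLike.inner_apply, dotProduct, mul_comm] using h

lemma cross3_smul (c : ℝ) (a b : EuclideanSpace ℝ (Fin 3)) :
    cross3 a (c • b) = c • cross3 a b := by
  simp [cross3, WithLp.ofLp_smul, WithLp.toLp_smul, map_smul]


/-- Gradient position observer (Proposition 2, transient-free form): under
persistency of excitation of the regressor `φ`, the estimate `ẑ = r̂ • y`
converges to `z` globally exponentially. -/
theorem stmt6 (α γ : ℝ) (hα : 0 < α) (hγ : 0 < γ)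
    (Ω v : ℝ → EuclideanSpace ℝ (Fin 3)) (hΩ : Continuous Ω) (hv : Continuous v)
    (z : ℝ → EuclideanSpace ℝ (Fin 3))
    (hz : Differentiable ℝ z)
    (hz0 : ∀ t ≥ (0:ℝ), z t ≠ 0)
    (hzd : ∀ t ≥ (0:ℝ), deriv z t = -cross3 (Ω t) (z t) - v t)
    (y : ℝ → EuclideanSpace ℝ (Fin 3)) (hy : y = fun t => ‖z t‖⁻¹ • z t)
    (xb p₂ q : ℝ → EuclideanSpace ℝ (Fin 3))
    (hxb : Differentiable ℝ xb)
    (hxbd : ∀ t ≥ (0:ℝ), deriv xb t = (-α) • xb t + (α ^ 2) • y t)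
    (hxb0 : xb 0 = α • y 0)
    (hp₂ : Differentiable ℝ p₂)
    (hp₂d : ∀ t ≥ (0:ℝ), deriv p₂ t = (-α) • p₂ t + α • cross3 (Ω t) (y t))
    (hp₂0 : p₂ 0 = 0)
    (φ : ℝ → EuclideanSpace ℝ (Fin 3)) (hφ : φ = fun t => α • y t - xb t + p₂ t)
    (hq : Differentiable ℝ q)
    (hqd : ∀ t ≥ (0:ℝ), deriv q t =
      (-α) • q t + ⟪y t, v t⟫ • φ t + α • (v t - ⟪y t, v t⟫ • y t))
    (hq0 : q 0 = 0)
    (T δ : ℝ) (hT : 0 < T) (hδ : 0 < δ)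
    (hPE : ∀ t ≥ (0:ℝ), δ ≤ ∫ s in t..(t + T), ‖φ s‖ ^ 2)
    (rhat : ℝ → ℝ) (hrhat : Differentiable ℝ rhat)
    (hrhatd : ∀ t ≥ (0:ℝ),
      deriv rhat t = -⟪y t, v t⟫ - γ * ⟪φ t, rhat t • φ t + q t⟫) :
    ∀ t ≥ (0:ℝ),
      ‖rhat t • y t - z t‖ ≤
        |rhat 0 - ‖z 0‖| * Real.exp (γ * δ) * Real.exp (-(γ * δ / T) * t) := by
  set r : ℝ → ℝ := fun s => ‖z s‖ with hr
  set U : Set ℝ := {s | z s ≠ 0} with hUdef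
  have hU : IsOpen U := isOpen_ne.preimage hz.continuous
  have hIU : Set.Ici (0:ℝ) ⊆ U := fun s hs => hz0 s hs
  have hrpos : ∀ s ∈ U, 0 < r s := fun s hs => norm_pos_iff.2 hs
  have hzy : ∀ s ∈ U, z s = r s • y s := by
    intro s hs
    rw [hy]
    rw [smul_inv_smul₀ (norm_ne_zero_iff.2 hs)]
  have hynorm : ∀ s ∈ U, ‖y s‖ = 1 := by
    intro s hs
    rw [hy]
    simp [norm_smul, abs_of_pos (inv_pos.2 (hrpos s hs)),
      inv_mul_cancel₀ (norm_ne_zero_iff.2 hs)]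
  -- continuity on U
  have hyc : ContinuousOn y U := by
    rw [hy]
    exact (hz.continuous.norm.continuousOn.inv₀
      (fun s hs => norm_ne_zero_iff.2 hs)).smul hz.continuous.continuousOn
  have hφc : ContinuousOn φ U := by
    rw [hφ]
    exact (((continuousOn_const (c := α)).smul hyc).sub hxb.continuous.continuousOn).add
      hp₂.continuous.continuousOn
  set f : ℝ → ℝ := fun s => ‖φ s‖ ^ 2 with hf
  have hfc : ContinuousOn f U := (hφc.norm).pow 2
  have hfnn : ∀ s, 0 ≤ f s := fun s => sq_nonneg _
  -- derivative of r
  have hrd0 : ∀ s ∈ U, HasDerivAt r (⟪y s, deriv z s⟫) s := by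
    intro s hs
    have h1 : HasDerivAt (fun u => ⟪z u, z u⟫) (⟪z s, deriv z s⟫ + ⟪deriv z s, z s⟫) s :=
      HasDerivAt.inner ℝ (hz s).hasDerivAt (hz s).hasDerivAt
    have hne : ⟪z s, z s⟫ ≠ 0 := inner_self_ne_zero.2 hs
    have h2 := h1.sqrt hne
    have hfun : (fun u => Real.sqrt ⟪z u, z u⟫) = r := by
      funext u
      rw [real_inner_self_eq_norm_sq, Real.sqrt_sq (norm_nonneg _)]
    have hval : (⟪z s, deriv z s⟫ + ⟪deriv z s, z s⟫) / (2 * Real.sqrt ⟪z s, z s⟫)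
        = ⟪y s, deriv z s⟫ := by
      rw [real_inner_comm (deriv z s) (z s), real_inner_self_eq_norm_sq,
        Real.sqrt_sq (norm_nonneg _), hy]
      rw [real_inner_smul_left]
      rw [real_inner_comm (deriv z s) (z s)]
      have hc : ‖z s‖ ≠ 0 := norm_ne_zero_iff.2 hs
      rw [eq_comm, inv_mul_eq_div, div_eq_div_iff hc (by positivity)]
      ring
    rw [hfun, hval] at h2
    exact h2
  have hrd : ∀ s ≥ (0:ℝ), HasDerivAt r (-⟪y s, v s⟫) s := by
    intro s hs
    have h := hrd0 s (hIU hs)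
    rw [hzd s hs] at h
    have : ⟪y s, -cross3 (Ω s) (z s) - v s⟫ = -⟪y s, v s⟫ := by
      rw [inner_sub_right, inner_neg_right]
      have : ⟪y s, cross3 (Ω s) (z s)⟫ = 0 := by
        rw [hy]
        simp only
        rw [real_inner_smul_left, inner_cross3_self, mul_zero]
      rw [this]
      ring
    rwa [this] at h
  -- the auxiliary state ψ and its ODE
  set ψ : ℝ → EuclideanSpace ℝ (Fin 3) :=
    fun s => α • z s - r s • xb s + r s • p₂ s + q s with hψdef
  have hψd : ∀ s ≥ (0:ℝ), HasDerivAt ψ ((-α) • ψ s) s := by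
    intro s hs
    have H := ((((hz s).hasDerivAt.const_smul α).sub
        ((hrd s hs).smul (hxb s).hasDerivAt)).add
        ((hrd s hs).smul (hp₂ s).hasDerivAt)).add (hq s).hasDerivAt
    have hcr : cross3 (Ω s) (z s) = r s • cross3 (Ω s) (y s) := by
      rw [hzy s (hIU hs), cross3_smul]
    refine H.congr_deriv ?_
    rw [hzd s hs, hxbd s hs, hp₂d s hs, hqd s hs, hφ]
    simp only [hψdef]
    rw [hcr, hzy s (hIU hs)]
    module
  have hψ0 : ψ 0 = 0 := by
    have h0 : r 0 • y 0 = z 0 := (hzy 0 (hIU Set.self_mem_Ici)).symm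
    simp only [hψdef, hq0, hp₂0, hxb0, smul_zero, add_zero]
    rw [smul_comm (r 0) α (y 0), h0]
    exact sub_self _
  have hψcont : Continuous ψ := by
    have hrc : Continuous r := hz.continuous.norm
    exact (((hz.continuous.const_smul α).sub (hrc.smul hxb.continuous)).add
      (hrc.smul hp₂.continuous)).add hq.continuous
  have hψ : ∀ t ≥ (0:ℝ), ψ t = 0 := by
    intro t ht
    set h : ℝ → EuclideanSpace ℝ (Fin 3) := fun s => Real.exp (α * s) • ψ s with hhdef
    have hh0 : h 0 = 0 := by simp [hhdef, hψ0]
    have hhd : ∀ s ∈ Set.Ico (0:ℝ) t, HasDerivWithinAt h 0 (Set.Ici s) s := by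
      intro s hs
      have he : HasDerivAt (fun s : ℝ => Real.exp (α * s)) (α * Real.exp (α * s)) s := by
        simpa [mul_comm] using ((hasDerivAt_id s).const_mul α).exp
      have := he.smul (hψd s hs.1)
      have h0 : Real.exp (α * s) • (-α) • ψ s + (α * Real.exp (α * s)) • ψ s = 0 := by
        module
      rw [h0] at this
      exact this.hasDerivWithinAt
    have hhc : Continuous h :=
      (Real.continuous_exp.comp (continuous_const.mul continuous_id)).smul hψcont
    have hconst := constant_of_has_deriv_right_zero hhc.continuousOn hhd t ⟨ht, le_rfl⟩
    rw [hh0] at hconst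
    have := (smul_eq_zero.1 hconst).resolve_left (Real.exp_ne_zero _)
    exact this
  -- q = -(r • φ)
  have hrφ : ∀ t ≥ (0:ℝ), r t • φ t + q t = 0 := by
    intro t ht
    have heq : r t • φ t + q t = ψ t := by
      rw [hφ]
      simp only [hψdef]
      rw [hzy t (hIU ht)]
      module
    rw [heq, hψ t ht]
  -- error dynamics
  set e : ℝ → ℝ := fun s => rhat s - r s with hedef
  have hed : ∀ s ≥ (0:ℝ), HasDerivAt e (-γ * f s * e s) s := by
    intro s hs
    have H := (hrhat s).hasDerivAt.sub (hrd s hs)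
    rw [hrhatd s hs] at H
    have hqe : rhat s • φ s + q s = e s • φ s := by
      calc rhat s • φ s + q s
          = (rhat s - r s) • φ s + (r s • φ s + q s) := by module
        _ = e s • φ s := by rw [hrφ s hs, add_zero]
    refine H.congr_deriv ?_
    rw [hqe, real_inner_smul_right, real_inner_self_eq_norm_sq]
    simp only [hf, hedef]
    ring
  -- the accumulated excitation
  set I : ℝ → ℝ := fun u => ∫ s in (0:ℝ)..u, f s with hIdef
  have hIint : ∀ a b : ℝ, 0 ≤ a → 0 ≤ b → IntervalIntegrable f MeasureTheory.volume a b := by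
    intro a b ha hb
    refine (hfc.mono ?_).intervalIntegrable
    intro x hx
    rcases Set.mem_uIcc.1 hx with h | h
    · exact hIU (le_trans ha h.1)
    · exact hIU (le_trans hb h.1)
  have hId : ∀ s ≥ (0:ℝ), HasDerivAt I (f s) s := by
    intro s hs
    exact intervalIntegral.integral_hasDerivAt_right (hIint 0 s le_rfl hs)
      (hfc.stronglyMeasurableAtFilter hU s (hIU hs))
      ((hfc.continuousAt (hU.mem_nhds (hIU hs))))
  have hI0 : I 0 = 0 := intervalIntegral.integral_same
  -- g is constant
  set g : ℝ → ℝ := fun s => e s * Real.exp (γ * I s) with hgdef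
  have hgd : ∀ s ≥ (0:ℝ), HasDerivAt g 0 s := by
    intro s hs
    have hE : HasDerivAt (fun u => Real.exp (γ * I u)) (γ * f s * Real.exp (γ * I s)) s := by
      have := ((hId s hs).const_mul γ).exp
      simpa [mul_comm, mul_assoc, mul_left_comm] using this
    have H := (hed s hs).mul hE
    refine H.congr_deriv ?_
    ring
  have hecont : Continuous e := hrhat.continuous.sub hz.continuous.norm
  have hgconst : ∀ t ≥ (0:ℝ), g t = e 0 := by
    intro t ht
    have hgco : ContinuousOn g (Set.Icc 0 t) := by
      intro s hs
      exact (hecont.continuousAt.mul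
        (Real.continuous_exp.continuousAt.comp
          (continuousAt_const.mul (hId s hs.1).continuousAt))).continuousWithinAt
    have := constant_of_has_deriv_right_zero hgco
      (fun s hs => (hgd s hs.1).hasDerivWithinAt) t ⟨ht, le_rfl⟩
    simpa [hgdef, hI0] using this
  have habs : ∀ t ≥ (0:ℝ), |e t| = |e 0| * Real.exp (-(γ * I t)) := by
    intro t ht
    have h1 := hgconst t ht
    have h2 : e t = e 0 * Real.exp (-(γ * I t)) := by
      have hne : Real.exp (γ * I t) ≠ 0 := Real.exp_ne_zero _
      have h1' : e t * Real.exp (γ * I t) = e 0 := h1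
      rw [← h1', Real.exp_neg, mul_assoc, mul_inv_cancel₀ hne, mul_one]
    rw [h2, abs_mul, abs_of_pos (Real.exp_pos _)]
  -- lower bound on I via persistency of excitation
  have hImono : ∀ a, 0 ≤ a → ∀ b, a ≤ b → I a ≤ I b := by
    intro a ha b hab
    have h1 := intervalIntegral.integral_add_adjacent_intervals
      (hIint 0 a le_rfl ha) (hIint a b ha (le_trans ha hab))
    have h2 : 0 ≤ ∫ s in a..b, f s :=
      intervalIntegral.integral_nonneg hab (fun u _ => hfnn u)
    simp only [hIdef]
    linarith [h1]
  have hIn : ∀ n : ℕ, δ * n ≤ I (n * T) := by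
    intro n
    induction n with
    | zero => simp [hI0]
    | succ n ih =>
      have hnT : (0:ℝ) ≤ n * T := by positivity
      have key := hPE (n * T) hnT
      have hadd := intervalIntegral.integral_add_adjacent_intervals
        (hIint 0 (n * T) le_rfl hnT) (hIint (n * T) (n * T + T) hnT (by positivity))
      have hcast : ((n:ℝ) + 1) * T = n * T + T := by ring
      push_cast
      rw [hcast]
      have : I (n * T + T) = I (n * T) + ∫ s in (n * T)..(n * T + T), f s := by
        simp only [hIdef]
        linarith [hadd]
      rw [this]
      have : δ ≤ ∫ s in (n * T)..(n * T + T), f s := by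
        simpa [hf] using key
      nlinarith
  have hIlb : ∀ t ≥ (0:ℝ), δ * (t / T) - δ ≤ I t := by
    intro t ht
    set n : ℕ := ⌊t / T⌋₊ with hn
    have h1 : (n:ℝ) * T ≤ t := by
      rw [← le_div_iff₀ hT]
      exact Nat.floor_le (div_nonneg ht hT.le)
    have h2 : t / T < n + 1 := Nat.lt_floor_add_one _
    have h3 : δ * n ≤ I (n * T) := hIn n
    have h4 : I (n * T) ≤ I t := hImono (n * T) (by positivity) t h1
    have h5 : δ * (t / T) ≤ δ * ((n:ℝ) + 1) := mul_le_mul_of_nonneg_left h2.le hδ.le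
    have h6 : δ * ((n:ℝ) + 1) - δ = δ * n := by ring
    linarith
  -- conclusion
  intro t ht
  have hz_eq := hzy t (hIU ht)
  have hnorm_eq : ‖rhat t • y t - z t‖ = |e t| := by
    rw [hz_eq, ← sub_smul, norm_smul, Real.norm_eq_abs, hynorm t (hIU ht), mul_one]
  rw [hnorm_eq, habs t ht]
  have hle : -(γ * I t) ≤ γ * δ + -(γ * δ / T) * t := by
    have := hIlb t ht
    have h5 : γ * (δ * (t / T) - δ) ≤ γ * I t :=
      mul_le_mul_of_nonneg_left this hγ.le
    have h6 : γ * (δ * (t / T) - δ) = γ * δ / T * t - γ * δ := by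
      field_simp
    linarith
  calc |e 0| * Real.exp (-(γ * I t))
      ≤ |e 0| * Real.exp (γ * δ + -(γ * δ / T) * t) := by
        exact mul_le_mul_of_nonneg_left (Real.exp_le_exp.2 hle) (abs_nonneg _)
    _ = |e 0| * Real.exp (γ * δ) * Real.exp (-(γ * δ / T) * t) := by
        rw [Real.exp_add, mul_assoc]
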